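/- Let n ≥ 4 and let ζ = exp(πi/(2n−1)) ∈ ℂ. Then ∏_{j=2}^{n−1} [2j]_ζ = ∏_{j=3}^{n−1} [j]_ζ, i.e. [2n−2]_ζ [2n−4]_ζ ⋯ [4]_ζ = [n−1]_ζ [n−2]_ζ ⋯ [3]_ζ; equivalently, the quantum dimension of the half-spin representation V(Λ_{n−1}) of so(2n) at ζ equals 1. -/

import Mathlib

open Complex

/-- `ζ = exp(πi/m)`, a primitive `2m`-th root of unity. -/
noncomputable def zeta (m : ℕ) : ℂ := Complex.exp (Real.pi * Complex.I / m)

/-- The `ζ`-integer `[n]_ζ = (ζ^n - ζ^{-n})/(ζ - ζ⁻¹)` for `ζ = exp(πi/m)`. -/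
noncomputable def qint (m : ℕ) (n : ℤ) : ℂ :=
  (zeta m ^ n - zeta m ^ (-n)) / (zeta m - (zeta m)⁻¹)

/-- Auxiliary: product of `1 + μ^k` over all `k < m`, `μ` a primitive `m`-th root, `m` odd. -/
lemma aux_prod_one_add_pow (m : ℕ) (hm : 0 < m) (hodd : Odd m) (μ : ℂ)
    (hμ : IsPrimitiveRoot μ m) :
    ∏ k ∈ Finset.range m, (1 + μ ^ k) = 2 := by
  have h := Polynomial.X_pow_sub_one_eq_prod hm hμ
  have himg : Polynomial.nthRootsFinset m (1 : ℂ) = Finset.image (μ ^ ·) (Finset.range m) := by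
    symm
    apply Finset.eq_of_subset_of_card_le
    · intro x hx
      simp only [Finset.mem_image, Finset.mem_range] at hx
      obtain ⟨k, hk, rfl⟩ := hx
      exact (Polynomial.mem_nthRootsFinset hm (1 : ℂ)).2
        (by rw [← pow_mul, mul_comm, pow_mul, hμ.pow_eq_one, one_pow])
    · rw [hμ.card_nthRootsFinset, Finset.card_image_of_injOn, Finset.card_range]
      intro a ha b hb hab
      exact hμ.pow_inj (Finset.mem_range.1 ha) (Finset.mem_range.1 hb) hab
  have h2 := congrArg (Polynomial.eval (-1 : ℂ)) h
  rw [himg, Finset.prod_image ?hinj] at h2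
  case hinj =>
    intro a ha b hb hab
    exact hμ.pow_inj (Finset.mem_range.1 ha) (Finset.mem_range.1 hb) hab
  simp only [Polynomial.eval_sub, Polynomial.eval_pow, Polynomial.eval_X, Polynomial.eval_one,
    Polynomial.eval_prod, Polynomial.eval_C] at h2
  rw [hodd.neg_one_pow] at h2
  have heq : ∏ k ∈ Finset.range m, ((-1 : ℂ) - μ ^ k) =
      ∏ k ∈ Finset.range m, (-(1 + μ ^ k)) := by
    apply Finset.prod_congr rfl; intro k _; ring
  have h3 : ∏ k ∈ Finset.range m, (-(1 + μ ^ k)) =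
      (-1:ℂ)^m * ∏ k ∈ Finset.range m, (1 + μ ^ k) := by
    calc ∏ k ∈ Finset.range m, (-(1 + μ ^ k))
        = ∏ k ∈ Finset.range m, (-1 * (1 + μ ^ k)) := by simp only [neg_one_mul]
      _ = (∏ _k ∈ Finset.range m, (-1:ℂ)) * ∏ k ∈ Finset.range m, (1 + μ ^ k) :=
          Finset.prod_mul_distrib
      _ = (-1:ℂ)^m * ∏ k ∈ Finset.range m, (1 + μ ^ k) := by
          rw [Finset.prod_const, Finset.card_range]
  rw [heq, h3, hodd.neg_one_pow] at h2
  linear_combination h2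

/-- Auxiliary: product of negatives. -/
lemma aux_prod_neg (s : Finset ℕ) (f : ℕ → ℂ) :
    ∏ i ∈ s, (-(f i)) = (-1 : ℂ) ^ s.card * ∏ i ∈ s, f i := by
  calc ∏ i ∈ s, (-(f i)) = ∏ i ∈ s, (-1 * f i) := by simp only [neg_one_mul]
    _ = (∏ _i ∈ s, (-1:ℂ)) * ∏ i ∈ s, f i := Finset.prod_mul_distrib
    _ = _ := by rw [Finset.prod_const]

theorem qdim_halfspin_D (n : ℕ) (hn : 4 ≤ n) :
    ∏ j ∈ Finset.Icc 2 (n - 1), qint (2 * n - 1) (2 * (j : ℤ)) =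
      ∏ j ∈ Finset.Icc 3 (n - 1), qint (2 * n - 1) (j : ℤ) := by
  set m : ℕ := 2 * n - 1 with hmdef
  have hm7 : 7 ≤ m := by omega
  have hmC : (m : ℂ) ≠ 0 := Nat.cast_ne_zero.2 (by omega)
  set z : ℂ := zeta m with hz
  have hz0 : z ≠ 0 := Complex.exp_ne_zero _
  -- z^m = -1
  have hzm : z ^ m = -1 := by
    rw [hz, zeta, ← Complex.exp_nat_mul]
    rw [show (m : ℂ) * (↑Real.pi * I / ↑m) = ↑Real.pi * I by field_simp]
    exact Complex.exp_pi_mul_I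
  -- z - z⁻¹ ≠ 0
  have hd : z - z⁻¹ ≠ 0 := by
    intro h
    have hsq : z ^ 2 = 1 := by
      have : z * z = z * z⁻¹ := by
        have := sub_eq_zero.1 h
        rw [← this]
      rw [mul_inv_cancel₀ hz0] at this
      rw [sq, this]
    have h2 : Complex.exp (2 * (↑Real.pi * I / ↑m)) = 1 := by
      rw [hz, zeta, ← Complex.exp_nat_mul] at hsq
      exact_mod_cast hsq
    rw [Complex.exp_eq_one_iff] at h2
    obtain ⟨k, hk⟩ := h2
    have hπ : (Real.pi : ℂ) ≠ 0 := by
      exact_mod_cast Real.pi_ne_zero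
    have hI : (I : ℂ) ≠ 0 := I_ne_zero
    have : ((k * m : ℤ) : ℂ) = 1 := by
      push_cast
      field_simp at hk
      have hne2 : (2 * (Real.pi : ℂ) * I) ≠ 0 := by
        simp [hπ, hI]
      have hmul : (2 * (Real.pi:ℂ) * I) * (↑k * ↑m) = (2 * (Real.pi:ℂ) * I) * 1 := by
        linear_combination (-(2 * (Real.pi:ℂ) * I)) * hk
      exact mul_left_cancel₀ hne2 hmul
    have : (k * m : ℤ) = 1 := by exact_mod_cast this
    have : (m : ℤ) ∣ 1 := ⟨k, by linarith⟩
    have := Int.le_of_dvd one_pos this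
    omega
  -- the cosine factors
  set c : ℕ → ℂ := fun j => z ^ (j : ℤ) + z ^ (-(j : ℤ)) with hc
  -- Step A: [2j] = [j] * c j
  have hA : ∀ j : ℕ, qint m (2 * (j : ℤ)) = qint m (j : ℤ) * c j := by
    intro j
    have e1 : z ^ (2 * (j : ℤ)) = z ^ (j : ℤ) * z ^ (j : ℤ) := by
      rw [← zpow_add₀ hz0]; ring_nf
    have e2 : z ^ (-(2 * (j : ℤ))) = z ^ (-(j : ℤ)) * z ^ (-(j : ℤ)) := by
      rw [← zpow_add₀ hz0]; ring_nf
    show (z ^ (2 * (j:ℤ)) - z ^ (-(2 * (j:ℤ)))) / (z - z⁻¹) =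
      (z ^ (j:ℤ) - z ^ (-(j:ℤ))) / (z - z⁻¹) * (z ^ (j:ℤ) + z ^ (-(j:ℤ)))
    rw [e1, e2, div_mul_eq_mul_div]
    congr 1
    ring
  -- [2] = c 1
  have hq2 : qint m (2 : ℤ) = c 1 := by
    show (z ^ (2:ℤ) - z ^ (-2:ℤ)) / (z - z⁻¹) = z ^ ((1:ℕ):ℤ) + z ^ (-((1:ℕ):ℤ))
    have e1 : z ^ (2:ℤ) = z * z := by rw [show (2:ℤ) = 1 + 1 by norm_num, zpow_add₀ hz0]; simp
    have e2 : z ^ (-2:ℤ) = z⁻¹ * z⁻¹ := by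
      rw [show (-2:ℤ) = -1 + -1 by norm_num, zpow_add₀ hz0]; simp
    rw [e1, e2, show z * z - z⁻¹ * z⁻¹ = (z - z⁻¹) * (z + z⁻¹) by ring,
      mul_div_cancel_left₀ _ hd]
    push_cast
    rw [zpow_one, zpow_neg_one]
  -- The key product: P = 1
  have hP : ∏ j ∈ Finset.Icc 1 (n - 1), c j = 1 := by
    -- reflection: c (m - k) = - c k
    have hzmz : z ^ ((m : ℕ) : ℤ) = -1 := by rw [zpow_natCast, hzm]
    have hrefl : ∀ k : ℕ, 1 ≤ k → k ≤ m → c (m - k) = - c k := by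
      intro k hk1 hk2
      have hcast : ((m - k : ℕ) : ℤ) = (m : ℤ) - k := by omega
      have e1 : z ^ ((m - k : ℕ) : ℤ) = - z ^ (-(k:ℤ)) := by
        rw [hcast, sub_eq_add_neg, zpow_add₀ hz0, hzmz]; ring
      have e2 : z ^ (-((m - k : ℕ) : ℤ)) = - z ^ (k:ℤ) := by
        rw [hcast, neg_sub, sub_eq_add_neg, zpow_add₀ hz0, zpow_neg, hzmz]
        norm_num
      show z ^ ((m - k : ℕ):ℤ) + z ^ (-((m - k : ℕ):ℤ)) = -(z ^ (k:ℤ) + z ^ (-(k:ℤ)))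
      rw [e1, e2]; ring
    -- c j as cosine
    have hcos : ∀ j : ℕ, c j = ((2 * Real.cos (j * Real.pi / m) : ℝ) : ℂ) := by
      intro j
      have hzj : z ^ (j:ℤ) = Complex.exp (((j * Real.pi / m : ℝ) : ℂ) * I) := by
        rw [zpow_natCast, hz, zeta, ← Complex.exp_nat_mul]
        congr 1
        push_cast
        ring
      have hzjn : z ^ (-(j:ℤ)) = Complex.exp (-((((j * Real.pi / m : ℝ)) : ℂ) * I)) := by
        rw [zpow_neg, hzj, ← Complex.exp_neg]
      show z ^ (j:ℤ) + z ^ (-(j:ℤ)) = _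
      rw [hzj, hzjn, show -((((j * Real.pi / m : ℝ)) : ℂ) * I) =
        ((-(j * Real.pi / m : ℝ) : ℝ) : ℂ) * I by push_cast; ring,
        Complex.exp_mul_I, Complex.exp_mul_I]
      push_cast [Complex.ofReal_cos, Complex.ofReal_sin, Complex.cos_neg, Complex.sin_neg]
      ring
    -- z^2 is a primitive m-th root of unity
    have hw : IsPrimitiveRoot (z^2) m := by
      have h := Complex.isPrimitiveRoot_exp m (by omega)
      have hz2 : z^2 = Complex.exp (2 * ↑Real.pi * I / ↑m) := by
        rw [hz, zeta, ← Complex.exp_nat_mul]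
        congr 1
        push_cast
        ring
      rwa [← hz2] at h
    -- product of (1 + (z^2)^j) over Icc 1 (m-1)
    have hins : Finset.range m = insert 0 (Finset.Icc 1 (m-1)) := by
      ext x; simp only [Finset.mem_range, Finset.mem_insert, Finset.mem_Icc]; omega
    have hprod1 : ∏ j ∈ Finset.Icc 1 (m-1), (1 + (z^2) ^ j) = 1 := by
      have h2 := aux_prod_one_add_pow m (by omega) ⟨n - 1, by omega⟩ (z^2) hw
      rw [hins, Finset.prod_insert (by simp)] at h2
      simp only [pow_zero] at h2
      have h2' : (2:ℂ) * ∏ j ∈ Finset.Icc 1 (m-1), (1 + (z^2) ^ j) = 2 * 1 := by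
        rw [mul_one]; linear_combination h2
      exact mul_left_cancel₀ two_ne_zero h2'
    -- c j = z^(-j) * (1 + (z^2)^j)
    have hc2 : ∀ j : ℕ, c j = z ^ (-(j:ℤ)) * (1 + (z^2)^j) := by
      intro j
      show z ^ (j:ℤ) + z ^ (-(j:ℤ)) = _
      rw [show ((z^2)^j : ℂ) = z ^ ((2*j : ℕ) : ℤ) by rw [← pow_mul, zpow_natCast],
        mul_add, mul_one, ← zpow_add₀ hz0,
        show (-(j:ℤ) + ((2*j:ℕ):ℤ)) = (j:ℤ) by push_cast; ring]
      ring
    -- sum of indices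
    have hsum : ∑ j ∈ Finset.Icc 1 (m-1), j = (n-1) * m := by
      have hg := Finset.sum_range_id_mul_two m
      rw [hins, Finset.sum_insert (by simp)] at hg
      simp only [zero_add] at hg
      apply Nat.eq_of_mul_eq_mul_right (show 0 < 2 by norm_num)
      rw [hg, show m - 1 = 2 * (n-1) by omega]
      ring
    -- the full product Q computed two ways
    have hQ1 : ∏ j ∈ Finset.Icc 1 (m-1), c j = (-1:ℂ)^(n-1) := by
      calc ∏ j ∈ Finset.Icc 1 (m-1), c j
          = ∏ j ∈ Finset.Icc 1 (m-1), (z ^ (-(j:ℤ)) * (1 + (z^2)^j)) :=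
            Finset.prod_congr rfl (fun j _ => hc2 j)
        _ = (∏ j ∈ Finset.Icc 1 (m-1), z ^ (-(j:ℤ))) *
              ∏ j ∈ Finset.Icc 1 (m-1), (1 + (z^2)^j) := Finset.prod_mul_distrib
        _ = ∏ j ∈ Finset.Icc 1 (m-1), z ^ (-(j:ℤ)) := by rw [hprod1, mul_one]
        _ = ∏ j ∈ Finset.Icc 1 (m-1), (z⁻¹) ^ j := by
            apply Finset.prod_congr rfl; intro j _
            rw [zpow_neg, zpow_natCast, inv_pow]
        _ = (z⁻¹) ^ (∑ j ∈ Finset.Icc 1 (m-1), j) := Finset.prod_pow_eq_pow_sum _ _ _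
        _ = (-1:ℂ)^(n-1) := by
            rw [hsum, mul_comm, pow_mul, inv_pow, hzm, inv_neg, inv_one]
    have hicc : ∀ x : ℕ, Finset.Icc 1 x = Finset.Ioc 0 x := by
      intro x; ext y; simp only [Finset.mem_Icc, Finset.mem_Ioc]; omega
    have hrefl2 : ∏ j ∈ Finset.Ioc (n-1) (m-1), c j =
        ∏ j ∈ Finset.Ioc 0 (n-1), (-(c j)) := by
      apply Finset.prod_nbij' (fun j => m - j) (fun j => m - j)
      · intro a ha; simp only [Finset.mem_Ioc] at *; omega
      · intro a ha; simp only [Finset.mem_Ioc] at *; omega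
      · intro a ha; simp only [Finset.mem_Ioc] at ha; omega
      · intro a ha; simp only [Finset.mem_Ioc] at ha; omega
      · intro a ha; simp only [Finset.mem_Ioc] at ha
        have h := hrefl (m - a) (by omega) (by omega)
        rw [show m - (m - a) = a by omega] at h
        exact h
    have hQ2 : ∏ j ∈ Finset.Icc 1 (m-1), c j =
        (∏ j ∈ Finset.Icc 1 (n-1), c j) *
          ((-1:ℂ)^(n-1) * ∏ j ∈ Finset.Icc 1 (n-1), c j) := by
      rw [hicc (m-1), ← Finset.prod_Ioc_consecutive c (show 0 ≤ n-1 by omega)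
        (show n-1 ≤ m-1 by omega), hrefl2, aux_prod_neg, hicc (n-1)]
      congr 2
      simp [Nat.card_Ioc]
    have hP2 : (∏ j ∈ Finset.Icc 1 (n-1), c j)^2 = 1 := by
      have hne : ((-1:ℂ)^(n-1)) ≠ 0 := pow_ne_zero _ (by norm_num)
      have hcomb := hQ2.symm.trans hQ1
      apply mul_left_cancel₀ hne
      rw [mul_one]
      linear_combination hcomb
    -- pass to reals
    have hPR : ∏ j ∈ Finset.Icc 1 (n-1), c j =
        ((∏ j ∈ Finset.Icc 1 (n-1), (2 * Real.cos (j * Real.pi / m)) : ℝ) : ℂ) := by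
      rw [Complex.ofReal_prod]
      exact Finset.prod_congr rfl fun j _ => hcos j
    set R : ℝ := ∏ j ∈ Finset.Icc 1 (n-1), (2 * Real.cos (j * Real.pi / m)) with hR
    have hR2 : R^2 = 1 := by
      have h := hP2
      rw [hPR] at h
      exact_mod_cast h
    have hRpos : 0 < R := by
      apply Finset.prod_pos
      intro j hj
      simp only [Finset.mem_Icc] at hj
      have hπ := Real.pi_pos
      have hm0 : (0:ℝ) < m := by exact_mod_cast (by omega : 0 < m)
      have harg : (j:ℝ) * Real.pi / m < Real.pi / 2 := by
        rw [div_lt_div_iff₀ hm0 (by norm_num)]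
        have hj2 : (2 * j : ℝ) < m := by exact_mod_cast (by omega : 2 * j < m)
        nlinarith
      have harg0 : 0 ≤ (j:ℝ) * Real.pi / m := by positivity
      have hcpos := Real.cos_pos_of_mem_Ioo ⟨by linarith, harg⟩
      linarith
    have hR1 : R = 1 := by
      have h0 : (R - 1) * (R + 1) = 0 := by linear_combination hR2
      rcases mul_eq_zero.1 h0 with h | h
      · linarith
      · linarith
    rw [hPR, hR1, Complex.ofReal_one]
  -- Assemble
  have hsplit1 : Finset.Icc 2 (n - 1) = insert 2 (Finset.Icc 3 (n - 1)) := by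
    ext x; simp only [Finset.mem_Icc, Finset.mem_insert]; omega
  have hsplit0 : Finset.Icc 1 (n - 1) = insert 1 (Finset.Icc 2 (n - 1)) := by
    ext x; simp only [Finset.mem_Icc, Finset.mem_insert]; omega
  calc ∏ j ∈ Finset.Icc 2 (n - 1), qint m (2 * (j : ℤ))
      = ∏ j ∈ Finset.Icc 2 (n - 1), (qint m (j : ℤ) * c j) :=
        Finset.prod_congr rfl (fun j _ => hA j)
    _ = (∏ j ∈ Finset.Icc 2 (n - 1), qint m (j : ℤ)) * ∏ j ∈ Finset.Icc 2 (n - 1), c j :=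
        Finset.prod_mul_distrib
    _ = (qint m (2 : ℤ) * ∏ j ∈ Finset.Icc 3 (n - 1), qint m (j : ℤ)) *
          ∏ j ∈ Finset.Icc 2 (n - 1), c j := by
        rw [hsplit1, Finset.prod_insert (by simp)]
        norm_num
    _ = (∏ j ∈ Finset.Icc 3 (n - 1), qint m (j : ℤ)) *
          (c 1 * ∏ j ∈ Finset.Icc 2 (n - 1), c j) := by
        rw [hq2]; ring
    _ = (∏ j ∈ Finset.Icc 3 (n - 1), qint m (j : ℤ)) * ∏ j ∈ Finset.Icc 1 (n - 1), c j := by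
        rw [hsplit0, Finset.prod_insert (by simp)]
    _ = ∏ j ∈ Finset.Icc 3 (n - 1), qint m (j : ℤ) := by rw [hP, mul_one]
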